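/- Let μ and ν be Borel probability measures on ℝ, both supported on [0,∞). Assume there exists K > 0 such that ν([0,K]) = 1, that μ has finite moments of every order, and that ∫ x^k dν(x) = ∫ x^k dμ(x) for every integer k ≥ 1. Then μ([0,K]) = 1, i.e., μ is also supported in the compact interval [0,K]. -/

import Mathlib

open MeasureTheory

/-- If `ν` is supported on `[0,K]` and `μ` (supported on `[0,∞)`, with finite
moments of every order) has the same moments as `ν`, then `μ` is also supported
on the compact interval `[0,K]`. -/
theorem compact_support_of_equal_moments
    (μ ν : Measure ℝ) [IsProbabilityMeasure μ] [IsProbabilityMeasure ν]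
    (hμsupp : μ (Set.Ici (0 : ℝ)) = 1) (hνsupp : ν (Set.Ici (0 : ℝ)) = 1)
    (K : ℝ) (hK : 0 < K) (hνK : ν (Set.Icc (0 : ℝ) K) = 1)
    (hμint : ∀ k : ℕ, 1 ≤ k → Integrable (fun x : ℝ => x ^ k) μ)
    (hmom : ∀ k : ℕ, 1 ≤ k → ∫ x, x ^ k ∂ν = ∫ x, x ^ k ∂μ) :
    μ (Set.Icc (0 : ℝ) K) = 1 := by
  by_contra hne
  -- a.e. statements
  have hν_ae : ∀ᵐ x ∂ν, x ∈ Set.Icc (0 : ℝ) K := by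
    rw [ae_iff]
    have : ν (Set.Icc (0 : ℝ) K)ᶜ = 0 := by
      rw [measure_compl measurableSet_Icc (measure_ne_top ν _), hνK, measure_univ, tsub_self]
    exact this
  have hμ_ae : ∀ᵐ x ∂μ, (0:ℝ) ≤ x := by
    rw [ae_iff]
    have : μ (Set.Ici (0 : ℝ))ᶜ = 0 := by
      rw [measure_compl measurableSet_Ici (measure_ne_top μ _), hμsupp, measure_univ, tsub_self]
    exact this
  -- ν moments bounded by K^k
  have hνbound : ∀ k : ℕ, ∫ x, x ^ k ∂ν ≤ K ^ k := by
    intro k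
    have hbd : ∀ᵐ x ∂ν, x ^ k ≤ K ^ k := by
      filter_upwards [hν_ae] with x hx
      exact pow_le_pow_left₀ hx.1 hx.2 k
    have hint : Integrable (fun x : ℝ => x ^ k) ν := by
      refine Integrable.mono' (integrable_const (K ^ k)) (by fun_prop) ?_
      filter_upwards [hν_ae] with x hx
      rw [Real.norm_eq_abs, abs_pow, abs_of_nonneg hx.1]
      exact pow_le_pow_left₀ hx.1 hx.2 k
    calc ∫ x, x ^ k ∂ν ≤ ∫ _, K ^ k ∂ν := integral_mono_ae hint (integrable_const _) hbd
      _ = K ^ k := by simp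
  -- μ puts positive mass above some c > K
  have hμIoi : 0 < μ (Set.Ioi K) := by
    by_contra h
    push_neg at h
    have h0 : μ (Set.Ioi K) = 0 := le_antisymm h (zero_le)
    have : μ (Set.Ici (0:ℝ)) ≤ μ (Set.Icc 0 K) + μ (Set.Ioi K) := by
      refine le_trans (measure_mono ?_) (measure_union_le _ _)
      intro x hx
      rcases le_or_gt x K with h' | h'
      · exact Or.inl ⟨hx, h'⟩
      · exact Or.inr h'
    rw [hμsupp, h0, add_zero] at this
    exact hne (le_antisymm prob_le_one this)
  obtain ⟨c, hcK, hc0⟩ : ∃ c, K < c ∧ 0 < μ (Set.Ici c) := by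
    by_contra h
    push_neg at h
    have h0 : ∀ n : ℕ, μ (Set.Ici (K + 1 / (n + 1))) = 0 := fun n =>
      le_antisymm (h _ (lt_add_of_pos_right K (by positivity))) (zero_le)
    have hsub : Set.Ioi K ⊆ ⋃ n : ℕ, Set.Ici (K + 1 / (n + 1)) := by
      intro x hx
      obtain ⟨n, hn⟩ := exists_nat_one_div_lt (sub_pos.mpr (show K < x from hx))
      refine Set.mem_iUnion.mpr ⟨n, ?_⟩
      simp only [Set.mem_Ici]
      linarith
    have : μ (Set.Ioi K) = 0 :=
      le_antisymm (le_trans (measure_mono hsub) (le_of_eq (measure_iUnion_null h0))) (zero_le)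
    exact absurd this (ne_of_gt hμIoi)
  set m : ℝ := (μ (Set.Ici c)).toReal with hm
  have hm0 : 0 < m := ENNReal.toReal_pos (ne_of_gt hc0) (measure_ne_top μ _)
  have hc0' : (0:ℝ) < c := hK.trans hcK
  -- lower bound for μ moments
  have hμbound : ∀ k : ℕ, 1 ≤ k → c ^ k * m ≤ ∫ x, x ^ k ∂μ := by
    intro k hk
    have h1 : c ^ k * m ≤ ∫ x in Set.Ici c, x ^ k ∂μ := by
      have := setIntegral_mono_on (integrable_const (c ^ k)).integrableOn
        ((hμint k hk).integrableOn) measurableSet_Ici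
        (fun x hx => pow_le_pow_left₀ (le_of_lt hc0') hx k)
      rwa [setIntegral_const, smul_eq_mul, mul_comm] at this
    have h2 : ∫ x in Set.Ici c, x ^ k ∂μ ≤ ∫ x, x ^ k ∂μ := by
      refine setIntegral_le_integral (hμint k hk) ?_
      filter_upwards [hμ_ae] with x hx
      positivity
    linarith
  -- contradiction: c^k m ≤ K^k for all k, but (K/c)^k → 0
  have key : ∀ k : ℕ, 1 ≤ k → m ≤ (K / c) ^ k := by
    intro k hk
    have := (hμbound k hk).trans ((hmom k hk).symm.le.trans (hνbound k))
    rw [div_pow, le_div_iff₀ (by positivity)]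
    linarith [this]
  obtain ⟨n, hn⟩ := exists_pow_lt_of_lt_one hm0 ((div_lt_one hc0').mpr hcK)
  have h1 : (K / c) ^ (n + 1) ≤ (K / c) ^ n :=
    pow_le_pow_of_le_one (by positivity) (le_of_lt ((div_lt_one hc0').mpr hcK)) (Nat.le_succ n)
  exact absurd (key (n + 1) (Nat.succ_le_succ (Nat.zero_le n))) (not_le.mpr (lt_of_le_of_lt h1 hn))
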